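/- A free ultrafilter U on ℕ is a P-point if and only if Player I has no winning strategy in the game G(U). Precisely: U is a P-point if and only if for every strategy σ for Player I (a function assigning to each finite sequence ⟨a₀,…,a_{n-1}⟩ of finite subsets of ℕ a set σ(⟨a₀,…,a_{n-1}⟩) ∈ U) there exists a sequence (a_n) of nonempty finite subsets of ℕ with a_n ⊆ σ(⟨a₀,…,a_{n-1}⟩) for every n and ⋃_n a_n ∈ U. -/

import Mathlib

namespace GalvinAux

/-- State of the block-building recursion:
`c = d n`, `p = d (n+1)`, `O` = list of odd-indexed blocks with index `≤ n-1`,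
`E` = list of even-indexed blocks with index `≤ n-1`. -/
structure St where
  c : ℕ
  p : ℕ
  O : List (Finset ℕ)
  E : List (Finset ℕ)

variable (x : Set ℕ) (hx : x.Infinite) (f : List (Finset ℕ) → ℕ)

noncomputable def pick (N : ℕ) : ℕ := (hx.exists_gt N).choose

lemma pick_mem (N : ℕ) : pick x hx N ∈ x := (hx.exists_gt N).choose_spec.1
lemma pick_gt (N : ℕ) : N < pick x hx N := (hx.exists_gt N).choose_spec.2

open Classical in
noncomputable def blk (c p : ℕ) : Finset ℕ := (Finset.Ioc c p).filter (· ∈ x)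

open Classical in
noncomputable def step (n : ℕ) (s : St) : St :=
  let bl := blk x s.c s.p
  let O' := if n % 2 = 1 then s.O ++ [bl] else s.O
  let E' := if n % 2 = 0 ∧ n ≠ 0 then s.E ++ [bl] else s.E
  ⟨s.p, pick x hx (max s.p (max (f O') (f E'))), O', E'⟩

noncomputable def S : ℕ → St
  | 0 => ⟨0, pick x hx (f []), [], []⟩
  | n+1 => step x hx f n (S n)

noncomputable def d (n : ℕ) : ℕ := (S x hx f n).c

noncomputable def b (n : ℕ) : Finset ℕ := blk x (d x hx f n) (d x hx f (n+1))

lemma S_succ (n : ℕ) : S x hx f (n+1) = step x hx f n (S x hx f n) := rfl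

lemma d_succ (n : ℕ) : d x hx f (n+1) = (S x hx f n).p := rfl

lemma key (n : ℕ) : d x hx f (n+1) ∈ x ∧ d x hx f n < d x hx f (n+1) ∧
    f ((S x hx f n).O) < d x hx f (n+1) ∧ f ((S x hx f n).E) < d x hx f (n+1) := by
  cases n with
  | zero =>
    have h1 : d x hx f 1 = pick x hx (f []) := rfl
    have h2 : (S x hx f 0).O = ([] : List (Finset ℕ)) := rfl
    have h3 : (S x hx f 0).E = ([] : List (Finset ℕ)) := rfl
    have h4 : d x hx f 0 = 0 := rfl
    have h5 := pick_gt x hx (f [])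
    refine ⟨h1 ▸ pick_mem x hx _, ?_, ?_, ?_⟩ <;> (rw [h1]) <;> first
      | omega
      | (rw [h2]; omega)
      | (rw [h3]; omega)
  | succ n =>
    have h1 : d x hx f (n+2) =
        pick x hx (max (d x hx f (n+1))
          (max (f ((S x hx f (n+1)).O)) (f ((S x hx f (n+1)).E)))) := rfl
    have h5 := pick_gt x hx (max (d x hx f (n+1))
          (max (f ((S x hx f (n+1)).O)) (f ((S x hx f (n+1)).E))))
    refine ⟨h1 ▸ pick_mem x hx _, ?_, ?_, ?_⟩ <;> rw [h1] <;> omega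

lemma d_mono : StrictMono (d x hx f) :=
  strictMono_nat_of_lt_succ fun n => (key x hx f n).2.1

lemma mem_b (n : ℕ) : d x hx f (n+1) ∈ b x hx f n := by
  classical
  unfold b blk
  simp only [Finset.mem_filter, Finset.mem_Ioc]
  exact ⟨⟨(key x hx f n).2.1, le_refl _⟩, (key x hx f n).1⟩

lemma b_mem {n t : ℕ} (ht : t ∈ b x hx f n) :
    t ∈ x ∧ d x hx f n < t ∧ t ≤ d x hx f (n+1) := by
  classical
  unfold b blk at ht
  simp only [Finset.mem_filter, Finset.mem_Ioc] at ht
  exact ⟨ht.2, ht.1.1, ht.1.2⟩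

lemma O_eq (n : ℕ) :
    (S x hx f n).O = List.ofFn (fun i : Fin (n/2) => b x hx f (2*(i:ℕ)+1)) := by
  induction n with
  | zero => exact List.ofFn_zero.symm
  | succ n ih =>
    have hs : (S x hx f (n+1)).O =
        if n % 2 = 1 then (S x hx f n).O ++ [b x hx f n] else (S x hx f n).O := rfl
    rw [hs]
    by_cases h : n % 2 = 1
    · rw [if_pos h, ih]
      obtain ⟨k, rfl⟩ : ∃ k, n = 2*k+1 := ⟨n/2, by omega⟩
      rw [show (2*k+1)/2 = k from by omega, show (2*k+1+1)/2 = k+1 from by omega,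
        List.ofFn_succ']
      simp [List.concat_eq_append]
    · rw [if_neg h, ih, show (n+1)/2 = n/2 from by omega]

lemma E_eq (n : ℕ) :
    (S x hx f n).E = List.ofFn (fun i : Fin ((n-1)/2) => b x hx f (2*(i:ℕ)+2)) := by
  induction n with
  | zero => exact List.ofFn_zero.symm
  | succ n ih =>
    have hs : (S x hx f (n+1)).E =
        if n % 2 = 0 ∧ n ≠ 0 then (S x hx f n).E ++ [b x hx f n] else (S x hx f n).E := rfl
    rw [hs]
    by_cases h : n % 2 = 0 ∧ n ≠ 0
    · rw [if_pos h, ih]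
      obtain ⟨k, rfl⟩ : ∃ k, n = 2*k+2 := ⟨n/2 - 1, by omega⟩
      rw [show (2*k+2-1)/2 = k from by omega, show (2*k+2+1-1)/2 = k+1 from by omega,
        List.ofFn_succ']
      simp [List.concat_eq_append]
    · rw [if_neg h, ih]
      rw [show (n+1-1)/2 = (n-1)/2 from by omega]

lemma f_lt_O (k : ℕ) :
    f (List.ofFn fun i : Fin k => b x hx f (2*(i:ℕ)+1)) < d x hx f (2*k+1) := by
  have h := (key x hx f (2*k)).2.2.1
  rwa [O_eq, show (2*k)/2 = k from by omega] at h

lemma f_lt_E (k : ℕ) :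
    f (List.ofFn fun i : Fin k => b x hx f (2*(i:ℕ)+2)) < d x hx f (2*k+2) := by
  have h := (key x hx f (2*k+1)).2.2.2
  rwa [E_eq, show (2*k+1-1)/2 = k from by omega] at h

/-- max of the sups of the finsets in a list. -/
def kk (l : List (Finset ℕ)) : ℕ := (l.map fun s => s.sup id).foldr max 0

lemma kk_le {l : List (Finset ℕ)} {s : Finset ℕ} (h : s ∈ l) : s.sup id ≤ kk l := by
  induction l with
  | nil => simp at h
  | cons hd tl ih =>
    rcases List.mem_cons.mp h with rfl | h'
    · exact le_max_left _ _
    · exact le_trans (ih h') (le_max_right _ _)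

end GalvinAux

/-- A free ultrafilter is one containing all cofinite sets. -/
def IsFree (U : Ultrafilter ℕ) : Prop := ∀ s : Set ℕ, s.Finite → sᶜ ∈ U

/-- `U` is a P-point: every countable subfamily of `U` has a pseudointersection
in `U`. -/
def IsPPoint (U : Ultrafilter ℕ) : Prop :=
  ∀ F : Set (Set ℕ), F.Countable → (∀ y ∈ F, y ∈ U) →
    ∃ x ∈ U, ∀ y ∈ F, (x \ y).Finite

/-- A free ultrafilter `U` is a P-point iff Player I has no winning strategy in the
game `G(U)`: for every strategy `σ` for Player I (assigning to each finite sequence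
of moves of Player II a set in `U`), there is a run `(a_n)` of nonempty finite sets
played according to `σ` whose union lies in `U`. -/
theorem ppoint_iff_no_winning_strategy (U : Ultrafilter ℕ) (hfree : IsFree U) :
    IsPPoint U ↔
      ∀ σ : List (Finset ℕ) → Set ℕ, (∀ l, σ l ∈ U) →
        ∃ a : ℕ → Finset ℕ, (∀ n, (a n).Nonempty) ∧
          (∀ n, (↑(a n) : Set ℕ) ⊆ σ (List.ofFn fun i : Fin n => a i)) ∧
          (⋃ n, (a n : Set ℕ)) ∈ U := by
  constructor
  · -- P-point ⇒ no winning strategy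
    intro hP σ hσ
    obtain ⟨x, hxU, hps⟩ := hP (Set.range σ) (Set.countable_range σ)
      (by rintro y ⟨l, rfl⟩; exact hσ l)
    have hfin : ∀ l, (x \ σ l).Finite := fun l => hps (σ l) ⟨l, rfl⟩
    have hxinf : x.Infinite := by
      by_contra h
      rw [Set.not_infinite] at h
      exact (Ultrafilter.compl_mem_iff_notMem.mp (hfree x h)) hxU
    set f : List (Finset ℕ) → ℕ := fun l => (hfin l).toFinset.sup id + 1 with hf
    have hfkey : ∀ l t, t ∈ x → f l ≤ t → t ∈ σ l := by
      intro l t htx hle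
      by_contra hns
      have hmem : t ∈ (hfin l).toFinset := by
        rw [Set.Finite.mem_toFinset]; exact ⟨htx, hns⟩
      have h2 : t ≤ (hfin l).toFinset.sup id := Finset.le_sup (f := id) hmem
      have h3 : f l = (hfin l).toFinset.sup id + 1 := by rw [hf]
      omega
    set d := GalvinAux.d x hxinf f with hd
    set b := GalvinAux.b x hxinf f with hb
    have hbne : ∀ n, (b n).Nonempty := fun n => ⟨d (n+1), GalvinAux.mem_b x hxinf f n⟩
    have hbsub : ∀ n t, t ∈ b n → t ∈ x ∧ d n < t ∧ t ≤ d (n+1) :=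
      fun n t ht => GalvinAux.b_mem x hxinf f ht
    have hodd : ∀ k, (↑(b (2*k+1)) : Set ℕ) ⊆
        σ (List.ofFn fun i : Fin k => b (2*(i:ℕ)+1)) := by
      intro k t ht
      obtain ⟨htx, hlt, _⟩ := hbsub _ t ht
      refine hfkey _ _ htx ?_
      have h1 := GalvinAux.f_lt_O x hxinf f k
      rw [← hd, ← hb] at h1
      omega
    have heven : ∀ k, (↑(b (2*k+2)) : Set ℕ) ⊆
        σ (List.ofFn fun i : Fin k => b (2*(i:ℕ)+2)) := by
      intro k t ht
      obtain ⟨htx, hlt, _⟩ := hbsub _ t ht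
      refine hfkey _ _ htx ?_
      have h1 := GalvinAux.f_lt_E x hxinf f k
      rw [← hd, ← hb] at h1
      omega
    have hmono : StrictMono d := GalvinAux.d_mono x hxinf f
    have hcov : x ∩ Set.Ioi (d 1) ⊆
        (⋃ k, (↑(b (2*k+1)) : Set ℕ)) ∪ ⋃ k, (↑(b (2*k+2)) : Set ℕ) := by
      rintro t ⟨htx, hgt⟩
      simp only [Set.mem_Ioi] at hgt
      have hex : ∃ m, t ≤ d (m+1) := ⟨t, le_of_lt (lt_of_lt_of_le (Nat.lt_succ_self t)
        (hmono.le_apply))⟩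
      set m := Nat.find hex with hmdef
      have hm1 : t ≤ d (m+1) := Nat.find_spec hex
      have hm0 : m ≠ 0 := by
        intro h0
        rw [h0] at hm1
        have hdd : d 1 = d (0+1) := rfl
        omega
      have hmlt : d m < t := by
        by_contra hcon
        push_neg at hcon
        have hmin := Nat.find_min hex (m := m - 1) (by omega)
        rw [show m - 1 + 1 = m from by omega] at hmin
        omega
      have htb : t ∈ b m := by
        rw [hb]
        unfold GalvinAux.b GalvinAux.blk
        simp only [Finset.mem_filter, Finset.mem_Ioc]
        rw [← hd]
        exact ⟨⟨hmlt, hm1⟩, htx⟩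
      rcases Nat.even_or_odd m with he | ho
      · obtain ⟨k, hk⟩ : ∃ k, m = 2*k+2 := by
          rcases he with ⟨j, hj⟩; exact ⟨j - 1, by omega⟩
        exact Or.inr (Set.mem_iUnion.mpr ⟨k, by rw [← hk]; exact htb⟩)
      · obtain ⟨k, hk⟩ : ∃ k, m = 2*k+1 := by
          rcases ho with ⟨j, hj⟩; exact ⟨j, by omega⟩
        exact Or.inl (Set.mem_iUnion.mpr ⟨k, by rw [← hk]; exact htb⟩)
    have hIoi : Set.Ioi (d 1) ∈ U := by
      rw [← Set.compl_Iic]; exact hfree _ (Set.finite_Iic _)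
    have hmemcov : x ∩ Set.Ioi (d 1) ∈ U := Filter.inter_mem hxU hIoi
    have hU2 : ((⋃ k, (↑(b (2*k+1)) : Set ℕ)) ∪ ⋃ k, (↑(b (2*k+2)) : Set ℕ)) ∈ U :=
      Filter.mem_of_superset hmemcov hcov
    rcases Ultrafilter.union_mem_iff.mp hU2 with h | h
    · exact ⟨fun k => b (2*k+1), fun k => hbne _, fun k => hodd k, h⟩
    · exact ⟨fun k => b (2*k+2), fun k => hbne _, fun k => heven k, h⟩
  · -- no winning strategy ⇒ P-point
    intro hNW F hFc hFU
    rcases F.eq_empty_or_nonempty with rfl | hne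
    · exact ⟨Set.univ, Filter.univ_mem, by simp⟩
    obtain ⟨g, rfl⟩ := Set.Countable.exists_eq_range hFc hne
    set σ : List (Finset ℕ) → Set ℕ := fun l =>
      (⋂ j ∈ Finset.range (GalvinAux.kk l + 1), g j) ∩ Set.Ioi (GalvinAux.kk l) with hσdef
    have hσU : ∀ l, σ l ∈ U := by
      intro l
      refine Filter.inter_mem ((Filter.biInter_finset_mem _).mpr fun i _ => hFU (g i) ⟨i, rfl⟩) ?_
      rw [← Set.compl_Iic]; exact hfree _ (Set.finite_Iic _)
    obtain ⟨a, hane, hasub, haU⟩ := hNW σ hσU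
    set L : ℕ → List (Finset ℕ) := fun n => List.ofFn fun i : Fin n => a i with hL
    have hstep : ∀ n, GalvinAux.kk (L n) < GalvinAux.kk (L (n+1)) := by
      intro n
      obtain ⟨t, ht⟩ := hane n
      have h1 : t ∈ σ (L n) := hasub n ht
      have h2 : GalvinAux.kk (L n) < t := h1.2
      have h3 : t ≤ (a n).sup id := Finset.le_sup (f := id) ht
      have h4 : (a n).sup id ≤ GalvinAux.kk (L (n+1)) := by
        refine GalvinAux.kk_le ?_
        rw [hL]
        exact List.mem_ofFn.mpr ⟨⟨n, Nat.lt_succ_self n⟩, rfl⟩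
      omega
    have hge : ∀ n, n ≤ GalvinAux.kk (L (n+1)) := by
      intro n
      induction n with
      | zero => exact Nat.zero_le _
      | succ n ih =>
        have := hstep (n+1)
        omega
    refine ⟨⋃ n, (a n : Set ℕ), haU, ?_⟩
    rintro y ⟨m, rfl⟩
    refine Set.Finite.subset (Set.Finite.biUnion (Finset.range (m+1)).finite_toSet
      (fun i _ => (a i).finite_toSet)) ?_
    rintro t ⟨htU, htm⟩
    obtain ⟨n, htn⟩ := Set.mem_iUnion.mp htU
    have hnm : n ≤ m := by
      by_contra hcon
      push_neg at hcon
      have h1 : t ∈ σ (L n) := hasub n htn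
      have h2 : t ∈ g m := by
        have h3 := h1.1
        rw [Set.mem_iInter₂] at h3
        refine h3 m ?_
        rw [Finset.mem_range]
        have h4 := hge (n-1)
        rw [show n - 1 + 1 = n from by omega] at h4
        omega
      exact htm h2
    exact Set.mem_biUnion (by simp [Finset.mem_range]; omega) htn
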